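/- arXiv:1107.4810 — 3 statements merged into one kernel-verified Lean document; each statement's English description precedes it below -/
import Mathlib

section
/- For every real number y, |R(i·y)| < 1 if and only if 0 < y² < 8 (equivalently, 0 < |y| < √8); moreover |R(i·y)| = 1 when y = 0 or y² = 8, and |R(i·y)| > 1 when y² > 8. -/
open Complex

/-- The RK4 stability polynomial `R(p) = 1 + p + p²/2 + p³/6 + p⁴/24`. -/
noncomputable def R (p : ℂ) : ℂ := 1 + p + p ^ 2 / 2 + p ^ 3 / 6 + p ^ 4 / 24

lemma normSq_R_imag (y : ℝ) :
    Complex.normSq (R (Complex.I * (y : ℂ))) = 1 + y ^ 6 * (y ^ 2 - 8) / 576 := by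
  have : R (Complex.I * (y : ℂ)) =
      Complex.mk (1 - y ^ 2 / 2 + y ^ 4 / 24) (y - y ^ 3 / 6) := by
    apply Complex.ext <;>
      simp [R, Complex.ext_iff, pow_succ, mul_re, mul_im, div_re, div_im,
        Complex.normSq_apply] <;> ring
  rw [this, Complex.normSq_mk]
  ring

/-- RK4 stability on the imaginary axis: `|R(i·y)| < 1` iff `0 < y² < 8`;
`|R(i·y)| = 1` when `y = 0` or `y² = 8`; and `|R(i·y)| > 1` when `y² > 8`. -/
theorem abs_R_imaginary_stability (y : ℝ) :
    (‖R (Complex.I * (y : ℂ))‖ < 1 ↔ 0 < y ^ 2 ∧ y ^ 2 < 8) ∧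
    ((y = 0 ∨ y ^ 2 = 8) → ‖R (Complex.I * (y : ℂ))‖ = 1) ∧
    (y ^ 2 > 8 → ‖R (Complex.I * (y : ℂ))‖ > 1) := by
  have hns := normSq_R_imag y
  have habs : ‖R (Complex.I * (y : ℂ))‖ =
      Real.sqrt (1 + y ^ 6 * (y ^ 2 - 8) / 576) := by
    rw [Complex.norm_def, hns]
  rw [habs]
  constructor
  · rw [Real.sqrt_lt' one_pos, one_pow]
    constructor
    · intro h
      have h6 : y ^ 6 * (y ^ 2 - 8) < 0 := by nlinarith
      have hy : y ≠ 0 := by intro h0; rw [h0] at h6; simp at h6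
      have h2 : 0 < y ^ 2 := pow_two_pos_of_ne_zero hy
      exact ⟨h2, by nlinarith [pow_pos h2 3]⟩
    · rintro ⟨h0, h8⟩
      have hy6 : 0 < y ^ 6 := by nlinarith [pow_pos h0 3]
      nlinarith
  constructor
  · rintro (h0 | h8)
    · simp [h0]
    · rw [h8]; simp
  · intro h
    rw [gt_iff_lt, Real.lt_sqrt one_pos.le, one_pow]
    have hy6 : 0 < y ^ 6 := by nlinarith [pow_pos (show (0:ℝ) < y ^ 2 by nlinarith) 3]
    nlinarith
end

section
/- Let a > 0 and s, V_b, V_{b−1} be real numbers, and let ψ_b, ψ_{b−1}, d_b, d_{b−1}, ℓ_b, ℓ_{b−1} be complex numbers with ψ_{b−1} ≠ 0. Assume the nonlinear Schrödinger relations i·d_b + a·ℓ_b − V_b·ψ_b + s·|ψ_b|²·ψ_b = 0 and i·d_{b−1} + a·ℓ_{b−1} − V_{b−1}·ψ_{b−1} + s·|ψ_{b−1}|²·ψ_{b−1} = 0 hold, together with the modulus-squared Dirichlet boundary relation d_b = i·Im(d_{b−1}/ψ_{b−1})·ψ_b. Then ℓ_b = [Im(i·ℓ_{b−1}/ψ_{b−1})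 + (N_{b−1} − N_b)/a]·ψ_b, where N_b = s·|ψ_b|² − V_b and N_{b−1} = s·|ψ_{b−1}|² − V_{b−1}. -/
open Complex

/-- The modulus-squared Dirichlet (MSD) boundary condition expressed in terms of
the Laplacian: if the NLSE relations hold at the boundary point `b` and the
adjacent interior point `b−1`, and the MSD time-derivative condition
`d_b = i·Im(d_{b−1}/ψ_{b−1})·ψ_b` holds, then
`ℓ_b = [Im(i·ℓ_{b−1}/ψ_{b−1}) + (N_{b−1} − N_b)/a]·ψ_b`. -/
theorem msd_laplacian (a s Vb Vbm : ℝ) (ha : 0 < a)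
    (ψb ψbm db dbm lb lbm : ℂ) (hψbm : ψbm ≠ 0)
    (hb : Complex.I * db + (a : ℂ) * lb - (Vb : ℂ) * ψb
        + (s : ℂ) * ((‖ψb‖ : ℝ) : ℂ) ^ 2 * ψb = 0)
    (hbm : Complex.I * dbm + (a : ℂ) * lbm - (Vbm : ℂ) * ψbm
        + (s : ℂ) * ((‖ψbm‖ : ℝ) : ℂ) ^ 2 * ψbm = 0)
    (hmsd : db = Complex.I * (((dbm / ψbm).im : ℝ) : ℂ) * ψb) :
    lb = ((((Complex.I * lbm / ψbm).im
            + ((s * (‖ψbm‖) ^ 2 - Vbm) - (s * (‖ψb‖) ^ 2 - Vb)) / a : ℝ)) : ℂ)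
          * ψb := by
  have ha' : (a : ℂ) ≠ 0 := by exact_mod_cast ha.ne'
  have h1 : dbm / ψbm = -Complex.I * ((Vbm : ℂ) - (s : ℂ) * ((‖ψbm‖ : ℝ) : ℂ) ^ 2)
      + (a : ℂ) * (Complex.I * lbm / ψbm) := by
    field_simp
    linear_combination (-Complex.I) * hbm + dbm * Complex.I_sq
  have h2 : (dbm / ψbm).im = a * (Complex.I * lbm / ψbm).im
      + s * (‖ψbm‖) ^ 2 - Vbm := by
    rw [h1]
    simp [Complex.add_im, Complex.mul_im, Complex.sub_im, Complex.ofReal_im,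
      Complex.ofReal_re, Complex.neg_re, Complex.neg_im, Complex.I_re, Complex.I_im,
      Complex.mul_re, ← Complex.ofReal_pow]
    ring
  have hlb : (a : ℂ) * lb = -(Complex.I * db) + (Vb : ℂ) * ψb
      - (s : ℂ) * ((‖ψb‖ : ℝ) : ℂ) ^ 2 * ψb := by linear_combination hb
  rw [hmsd] at hlb
  have : lb = (-(Complex.I * (Complex.I * (((dbm / ψbm).im : ℝ) : ℂ) * ψb)) + (Vb : ℂ) * ψb
      - (s : ℂ) * ((‖ψb‖ : ℝ) : ℂ) ^ 2 * ψb) / a := by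
    field_simp
    linear_combination hlb
  rw [this, h2]
  simp only [div_eq_mul_inv]
  push_cast
  field_simp
  linear_combination ((a : ℂ) * ψb * (((Complex.I * lbm * ψbm⁻¹).im : ℝ) : ℂ) - (a : ℂ) * (((Complex.I * lbm / ψbm).im : ℝ) : ℂ) * ψb + (-((a : ℂ) * ψb * (((Complex.I * lbm * ψbm⁻¹).im : ℝ) : ℂ)) - (s : ℂ) * ((‖ψbm‖ : ℝ) : ℂ) ^ 2 * ψb + (Vbm : ℂ) * ψb)) * Complex.I_sq
end

section
/- Let a, h, k be positive real numbers with k < (√8/4)·(h²/a), and let N ≥ 1 be a natural number. Then for every j ∈ Fin N, |R(i·k·(a/h²)·(−2 + 2·cos(2πj/N)))| ≤ 1, with strict inequality whenever cos(2πj/N) ≠ 1. (Linearized stability of the RK4 scheme with second-order central differencing and periodic boundary conditions for the linear Schrödinger equation i∂Ψ/∂t + a∇²Ψ = 0 in one dimension.) -/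
open Complex

lemma key (y : ℝ) : (‖R (Complex.I * y)‖)^2 = 1 + y^6*(y^2-8)/576 := by
  have h : R (Complex.I * y) = Complex.mk (1 - y^2/2 + y^4/24) (y - y^3/6) := by
    simp [R, Complex.ext_iff, pow_succ, Complex.mul_re, Complex.mul_im]
    constructor <;> ring
  rw [h, Complex.sq_norm, Complex.normSq_mk]
  ring

/-- Linearized stability of RK4 with second-order central differencing and
periodic boundary conditions for the 1D linear Schrödinger equation: if
`k < (√8/4)·(h²/a)` then `|R(i·k·(a/h²)·(−2 + 2·cos(2πj/N)))| ≤ 1` for every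
eigenvalue index `j`, strictly whenever `cos(2πj/N) ≠ 1`. -/
theorem rk4_cd2_periodic_stable (a h k : ℝ) (ha : 0 < a) (hh : 0 < h) (hk : 0 < k)
    (hbound : k < Real.sqrt 8 / 4 * (h ^ 2 / a)) (N : ℕ) (hN : 1 ≤ N) :
    ∀ j : Fin N,
      ‖R (Complex.I *
          ((k * (a / h ^ 2) * (-2 + 2 * Real.cos (2 * Real.pi * (j : ℕ) / N)) : ℝ) : ℂ))‖ ≤ 1 ∧
      (Real.cos (2 * Real.pi * (j : ℕ) / N) ≠ 1 →
        ‖R (Complex.I *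
          ((k * (a / h ^ 2) * (-2 + 2 * Real.cos (2 * Real.pi * (j : ℕ) / N)) : ℝ) : ℂ))‖ < 1) := by
  intro j
  set c : ℝ := Real.cos (2 * Real.pi * (j : ℕ) / N) with hc
  set y : ℝ := k * (a / h ^ 2) * (-2 + 2 * c) with hy
  have hc1 : c ≤ 1 := Real.cos_le_one _
  have hcm1 : -1 ≤ c := Real.neg_one_le_cos _
  have hA : 0 < a / h ^ 2 := div_pos ha (by positivity)
  have h8 : (Real.sqrt 8) ^ 2 = 8 := Real.sq_sqrt (by norm_num)
  have hs : 0 < Real.sqrt 8 := Real.sqrt_pos.mpr (by norm_num)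
  have hkA : k * (a / h ^ 2) < Real.sqrt 8 / 4 := by
    calc k * (a / h ^ 2) < Real.sqrt 8 / 4 * (h ^ 2 / a) * (a / h ^ 2) :=
          mul_lt_mul_of_pos_right hbound hA
    _ = Real.sqrt 8 / 4 := by field_simp
  have hy2 : y ^ 2 < 8 := by
    have hyle : -Real.sqrt 8 < y := by
      have : y = k * (a / h ^ 2) * (-2 + 2 * c) := hy
      nlinarith [mul_pos hk hA]
    have hyge : y ≤ 0 := by nlinarith [mul_pos hk hA]
    nlinarith
  have habs := key y
  have hnn : 0 ≤ ‖R (Complex.I * (y:ℂ))‖ := norm_nonneg _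
  constructor
  · nlinarith [habs, hnn, sq_nonneg (y^3), hy2]
  · intro hne
    have hclt : c < 1 := lt_of_le_of_ne hc1 hne
    have hylt : y < 0 := by nlinarith [mul_pos hk hA]
    have h3 : y ^ 3 < 0 := Odd.pow_neg (by decide) hylt
    have hy6 : 0 < y ^ 6 := by nlinarith
    nlinarith [habs, hnn, hy2]
end
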